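/- For m a positive integer, α > 2, and z ≥ 0, it holds that ∫₀^∞ (1 − (1 + z r^{−α})^{−m}) · 2πλ r dr = πλ z^{2/α}·Γ(1 − 2/α)·Γ(m + 2/α)/Γ(m) (for λ > 0), i.e., the integral converges and has this closed form. -/

import Mathlib

open Real MeasureTheory Set

lemma real_beta01 {a b : ℝ} (ha : 0 < a) (hb : 0 < b) :
    IntegrableOn (fun x : ℝ => x ^ (a-1) * (1-x) ^ (b-1)) (Ioo 0 1) ∧
    ∫ x in Ioo (0:ℝ) 1, x ^ (a-1) * (1-x) ^ (b-1) =
      Gamma a * Gamma b / Gamma (a+b) := by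
  have key : ∀ x ∈ Ioo (0:ℝ) 1,
      ((x:ℂ) ^ ((a:ℂ)-1) * (1-(x:ℂ)) ^ ((b:ℂ)-1)) =
        ((x ^ (a-1) * (1-x) ^ (b-1) : ℝ) : ℂ) := by
    intro x hx
    rw [Complex.ofReal_mul, Complex.ofReal_cpow hx.1.le,
      Complex.ofReal_cpow (by linarith [hx.2] : (0:ℝ) ≤ 1 - x)]
    push_cast
    ring
  have hconv := Complex.betaIntegral_convergent (u := a) (v := b) (by simpa) (by simpa)
  have h1 : IntegrableOn (fun x : ℝ => (x:ℂ) ^ ((a:ℂ)-1) * (1-(x:ℂ)) ^ ((b:ℂ)-1))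
      (Ioo 0 1) := by
    exact hconv.1.mono_set Ioo_subset_Ioc_self
  have hint : IntegrableOn (fun x : ℝ => x ^ (a-1) * (1-x) ^ (b-1)) (Ioo 0 1) := by
    refine IntegrableOn.congr_fun h1.re (fun x hx => ?_) measurableSet_Ioo
    rw [key x hx]; simp
  refine ⟨hint, ?_⟩
  have hG : Complex.Gamma a * Complex.Gamma b
      = Complex.Gamma (a+b) * Complex.betaIntegral a b := by
    have := Complex.Gamma_mul_Gamma_eq_betaIntegral (s := a) (t := b) (by simpa) (by simpa)
    simpa using this
  have hbeta : Complex.betaIntegral a b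
      = ((∫ x in Ioo (0:ℝ) 1, x ^ (a-1) * (1-x) ^ (b-1) : ℝ) : ℂ) := by
    rw [Complex.betaIntegral,
      intervalIntegral.integral_of_le (by norm_num : (0:ℝ) ≤ 1),
      integral_Ioc_eq_integral_Ioo,
      setIntegral_congr_fun measurableSet_Ioo key]
    exact _root_.integral_ofReal
  rw [hbeta, ← Complex.ofReal_add, Complex.Gamma_ofReal, Complex.Gamma_ofReal,
    Complex.Gamma_ofReal, ← Complex.ofReal_mul, ← Complex.ofReal_mul] at hG
  have hGab : Gamma (a+b) ≠ 0 := (Gamma_pos_of_pos (by linarith)).ne'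
  have := Complex.ofReal_injective hG
  field_simp
  linarith [this]

lemma beta_Ioi {a b : ℝ} (ha : 0 < a) (hb : 0 < b) :
    IntegrableOn (fun t : ℝ => t ^ (a-1) * (1+t) ^ (-(a+b))) (Ioi 0) ∧
    ∫ t in Ioi (0:ℝ), t ^ (a-1) * (1+t) ^ (-(a+b)) =
      Gamma a * Gamma b / Gamma (a+b) := by
  set g : ℝ → ℝ := fun t => t ^ (a-1) * (1+t) ^ (-(a+b)) with hg
  set f : ℝ → ℝ := fun x => x * (1-x)⁻¹ with hf
  set f' : ℝ → ℝ := fun x => ((1-x)^2)⁻¹ with hf'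
  have hderiv : ∀ x ∈ Ioo (0:ℝ) 1, HasDerivWithinAt f (f' x) (Ioo 0 1) x := by
    intro x hx
    have hu : (0:ℝ) < 1 - x := by linarith [hx.2]
    have h1 : HasDerivAt (fun y : ℝ => 1 - y) (-1) x := by
      simpa using (hasDerivAt_id x).const_sub 1
    have h2 := h1.inv hu.ne'
    have h3 := (hasDerivAt_id x).mul h2
    have : HasDerivAt f (f' x) x := by
      refine (h3 : HasDerivAt f _ x).congr_deriv ?_
      simp only [hf', id_eq, one_mul, Pi.inv_apply]
      field_simp
      ring
    exact this.hasDerivWithinAt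
  have hinj : InjOn f (Ioo 0 1) := by
    intro x hx y hy hxy
    have hux : (0:ℝ) < 1 - x := by linarith [hx.2]
    have huy : (0:ℝ) < 1 - y := by linarith [hy.2]
    simp only [hf] at hxy
    field_simp at hxy
    nlinarith [hxy]
  have himg : f '' (Ioo 0 1) = Ioi 0 := by
    ext t
    constructor
    · rintro ⟨x, hx, rfl⟩
      have hu : (0:ℝ) < 1 - x := by linarith [hx.2]
      exact mul_pos hx.1 (inv_pos.mpr hu)
    · intro ht
      have ht0 : (0:ℝ) < t := ht
      refine ⟨t / (1+t), ⟨by positivity, ?_⟩, ?_⟩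
      · rw [div_lt_one (by linarith)]; linarith
      · simp only [hf]
        rw [show (1:ℝ) - t/(1+t) = 1/(1+t) by field_simp; ring]
        field_simp
  have hpt : ∀ x ∈ Ioo (0:ℝ) 1, |f' x| • g (f x) = x ^ (a-1) * (1-x) ^ (b-1) := by
    intro x hx
    have hx0 : (0:ℝ) < x := hx.1
    have hu : (0:ℝ) < 1 - x := by linarith [hx.2]
    have h1f : 1 + f x = (1-x)⁻¹ := by
      simp only [hf]; field_simp; ring
    have habs : |f' x| = (1-x) ^ (-(2:ℝ)) := by
      simp only [hf']
      rw [abs_of_pos (by positivity), ← Real.rpow_natCast (1-x) 2,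
        ← Real.rpow_neg hu.le]
      norm_num
    simp only [hg, smul_eq_mul, h1f, habs, hf]
    rw [show 1 + x * (1-x)⁻¹ = (1-x)⁻¹ from h1f,
      Real.mul_rpow hx0.le (inv_nonneg.mpr hu.le), Real.inv_rpow hu.le,
      Real.inv_rpow hu.le, ← Real.rpow_neg hu.le, ← Real.rpow_neg hu.le, neg_neg]
    have e : (1-x)^(b-1) = (1-x)^(-(2:ℝ)) * ((1-x)^(-(a-1)) * (1-x)^(a+b)) := by
      rw [← Real.rpow_add hu, ← Real.rpow_add hu]
      congr 1
      ring
    rw [e]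
    ring
  obtain ⟨hbint, hbval⟩ := real_beta01 ha hb
  have hiff := integrableOn_image_iff_integrableOn_abs_deriv_smul
    measurableSet_Ioo hderiv hinj g
  rw [himg] at hiff
  have hint2 : IntegrableOn (fun x => |f' x| • g (f x)) (Ioo 0 1) :=
    hbint.congr_fun (fun x hx => (hpt x hx).symm) measurableSet_Ioo
  refine ⟨hiff.mpr hint2, ?_⟩
  have him := integral_image_eq_integral_abs_deriv_smul
    measurableSet_Ioo hderiv hinj g
  rw [himg] at him
  rw [show (∫ t in Ioi (0:ℝ), t ^ (a-1) * (1+t) ^ (-(a+b))) = ∫ t in Ioi (0:ℝ), g t from rfl,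
    him, setIntegral_congr_fun measurableSet_Ioo hpt, hbval]

lemma key_int {d : ℝ} (hd0 : 0 < d) (hd1 : d < 1) :
    ∀ m : ℕ, 1 ≤ m →
    IntegrableOn (fun t : ℝ => (1 - (1+t) ^ (-(m:ℝ))) * t ^ (-1-d)) (Ioi 0) ∧
    ∫ t in Ioi (0:ℝ), (1 - (1+t) ^ (-(m:ℝ))) * t ^ (-1-d) =
      Gamma (1-d) * Gamma ((m:ℝ)+d) / (d * Gamma (m:ℝ)) := by
  intro m
  induction m with
  | zero => omega
  | succ n ih =>
    intro _
    rcases Nat.eq_zero_or_pos n with hn | hn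
    · -- base case m = 1
      subst hn
      have hb := beta_Ioi (a := 1-d) (b := d) (by linarith) hd0
      have hpt : ∀ t ∈ Ioi (0:ℝ),
          t ^ ((1-d)-1) * (1+t) ^ (-((1-d)+d))
            = (1 - (1+t) ^ (-((0+1:ℕ):ℝ))) * t ^ (-1-d) := by
        intro t ht
        have ht0 : (0:ℝ) < t := ht
        have h1t : (0:ℝ) < 1 + t := by linarith
        rw [show (((0+1:ℕ)):ℝ) = 1 by norm_num, show -(1:ℝ) = -1 from rfl,
          Real.rpow_neg_one, show ((1-d)-1 : ℝ) = (-1-d)+1 by ring,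
          show (-((1-d)+d) : ℝ) = -1 by ring, Real.rpow_neg_one,
          Real.rpow_add ht0, Real.rpow_one]
        field_simp
        ring
      constructor
      · exact hb.1.congr_fun hpt measurableSet_Ioi
      · rw [← setIntegral_congr_fun measurableSet_Ioi hpt, hb.2]
        rw [show (1-d)+d = (1:ℝ) by ring, Real.Gamma_one,
          show (((0+1:ℕ)):ℝ) = 1 by norm_num, Real.Gamma_one,
          show (1:ℝ)+d = d+1 by ring, Real.Gamma_add_one hd0.ne']
        field_simp
    · -- inductive step
      obtain ⟨ih1, ih2⟩ := ih hn
      have hb := beta_Ioi (a := 1-d) (b := (n:ℝ)+d) (by linarith)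
        (by positivity)
      have hn0 : (0:ℝ) < (n:ℝ) := by exact_mod_cast hn
      have hsplit : ∀ t ∈ Ioi (0:ℝ),
          ((1 - (1+t) ^ (-(n:ℝ))) * t ^ (-1-d)
            + t ^ ((1-d)-1) * (1+t) ^ (-((1-d)+((n:ℝ)+d))))
          = (1 - (1+t) ^ (-(((n+1):ℕ):ℝ))) * t ^ (-1-d) := by
        intro t ht
        have ht0 : (0:ℝ) < t := ht
        have h1t : (0:ℝ) < 1 + t := by linarith
        have e1 : (1+t) ^ (-(((n+1):ℕ):ℝ)) = (1+t) ^ (-(n:ℝ)) * (1+t)⁻¹ := by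
          push_cast
          rw [show -((n:ℝ)+1) = -(n:ℝ) + (-1) by ring, Real.rpow_add h1t,
            Real.rpow_neg_one]
        have e2 : (1+t) ^ (-((1-d)+((n:ℝ)+d))) = (1+t) ^ (-(n:ℝ)) * (1+t)⁻¹ := by
          rw [show -((1-d)+((n:ℝ)+d)) = -(n:ℝ) + (-1) by ring, Real.rpow_add h1t,
            Real.rpow_neg_one]
        have e3 : t ^ ((1-d)-1) = t ^ (-1-d) * t := by
          rw [show ((1-d)-1 : ℝ) = (-1-d)+1 by ring, Real.rpow_add ht0, Real.rpow_one]
        rw [e1, e2, e3]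
        field_simp
        ring
      constructor
      · exact IntegrableOn.congr_fun (ih1.add hb.1) hsplit measurableSet_Ioi
      · rw [← setIntegral_congr_fun measurableSet_Ioi hsplit,
          integral_add ih1 hb.1, ih2, hb.2]
        rw [show (1-d)+((n:ℝ)+d) = (n:ℝ)+1 by ring, Real.Gamma_add_one hn0.ne']
        have h1 : Gamma (((n+1:ℕ)):ℝ) = (n:ℝ) * Gamma (n:ℝ) := by
          push_cast
          rw [Real.Gamma_add_one hn0.ne']
        have h2 : Gamma ((((n+1:ℕ)):ℝ)+d) = ((n:ℝ)+d) * Gamma ((n:ℝ)+d) := by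
          push_cast
          rw [show (n:ℝ)+1+d = ((n:ℝ)+d)+1 by ring,
            Real.Gamma_add_one (by positivity)]
        rw [h1, h2]
        have hGn : Gamma (n:ℝ) ≠ 0 := (Real.Gamma_pos_of_pos hn0).ne'
        field_simp

theorem interference_integral_closed_form
    (m : ℕ) (hm : 1 ≤ m) (α z lam : ℝ) (hα : 2 < α) (hz : 0 ≤ z) (hlam : 0 < lam) :
    IntegrableOn (fun r : ℝ =>
        (1 - (1 + z * r ^ (-α)) ^ (-(m : ℝ))) * (2 * π * lam * r)) (Set.Ioi 0) ∧
    ∫ r in Set.Ioi (0 : ℝ),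
        (1 - (1 + z * r ^ (-α)) ^ (-(m : ℝ))) * (2 * π * lam * r) =
      π * lam * z ^ (2 / α) * Real.Gamma (1 - 2 / α) *
        Real.Gamma ((m : ℝ) + 2 / α) / Real.Gamma (m : ℝ) := by
  have hα0 : (0:ℝ) < α := by linarith
  rcases eq_or_lt_of_le hz with hz0 | hz0
  · -- z = 0
    have hfun : (fun r : ℝ =>
        (1 - (1 + z * r ^ (-α)) ^ (-(m : ℝ))) * (2 * π * lam * r)) = fun _ => (0:ℝ) := by
      funext r
      rw [← hz0]
      simp
    have hzrp : z ^ (2/α) = 0 := by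
      rw [← hz0]
      exact Real.zero_rpow (by positivity : (0:ℝ) < 2/α).ne'
    rw [hfun, hzrp]
    simp
  · -- z > 0
    set d : ℝ := 2/α with hd
    have hd0 : 0 < d := by positivity
    have hd1 : d < 1 := by
      rw [hd, div_lt_one hα0]; exact hα
    have hαd : α * d = 2 := by
      rw [hd]; field_simp
    obtain ⟨hI, hIv⟩ := key_int hd0 hd1 m hm
    set h : ℝ → ℝ := fun t => (1 - (1+t) ^ (-(m:ℝ))) * t ^ (-1-d) with hh
    set c : ℝ := 2 * π * lam / α with hc
    set F0 : ℝ → ℝ := fun x => c * z ^ (1+d) * h (z*x) with hF0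
    have hscale : IntegrableOn (fun x : ℝ => h (z*x)) (Ioi 0) := by
      have := (integrableOn_Ioi_comp_mul_left_iff h 0 hz0).mpr (by simpa using hI)
      exact this
    have hF0int : IntegrableOn F0 (Ioi 0) := hscale.const_mul _
    have hF0val : ∫ x in Ioi (0:ℝ), F0 x
        = c * z ^ d * (Gamma (1-d) * Gamma ((m:ℝ)+d) / (d * Gamma (m:ℝ))) := by
      simp only [hF0]
      rw [integral_const_mul, integral_comp_mul_left_Ioi h 0 hz0]
      simp only [mul_zero, smul_eq_mul]
      rw [hIv]
      rw [show c * z ^ (1+d) * (z⁻¹ * (Gamma (1-d) * Gamma ((m:ℝ)+d) / (d * Gamma (m:ℝ))))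
          = c * (z ^ (1+d) * z⁻¹) * (Gamma (1-d) * Gamma ((m:ℝ)+d) / (d * Gamma (m:ℝ)))
          by ring]
      congr 2
      rw [Real.rpow_add hz0, Real.rpow_one]
      field_simp
    have hp : (-α) ≠ 0 := by linarith
    have hca : α * c = 2 * π * lam := by
      rw [hc]; field_simp
    have hkey : ∀ r ∈ Ioi (0:ℝ), (|(-α)| * r ^ ((-α) - 1)) • F0 (r ^ (-α))
        = (1 - (1 + z * r ^ (-α)) ^ (-(m : ℝ))) * (2 * π * lam * r) := by
      intro r hr
      have hr0 : (0:ℝ) < r := hr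
      have hx : (0:ℝ) < r ^ (-α) := rpow_pos_of_pos hr0 _
      have hz1 : z ^ (1+d) * z ^ (-1-d) = 1 := by
        rw [← Real.rpow_add hz0]
        norm_num
      have hr1 : r ^ ((-α)-1) * r ^ ((-α)*(-1-d)) = r := by
        rw [← Real.rpow_add hr0,
          show ((-α)-1) + (-α)*(-1-d) = α*d - 1 by ring, hαd]
        norm_num
      simp only [hF0, hh, smul_eq_mul, abs_neg, abs_of_pos hα0]
      rw [Real.mul_rpow hz0.le hx.le, ← Real.rpow_mul hr0.le]
      set G : ℝ := 1 - (1 + z * r ^ (-α)) ^ (-(m:ℝ)) with hG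
      rw [show α * r ^ ((-α)-1) * (c * z ^ (1+d) * (G * (z ^ (-1-d) * r ^ ((-α)*(-1-d)))))
          = (α * c) * (z ^ (1+d) * z ^ (-1-d)) * (r ^ ((-α)-1) * r ^ ((-α)*(-1-d))) * G
          by ring]
      rw [hz1, hr1, hca]
      ring
    constructor
    · have := (integrableOn_Ioi_comp_rpow_iff F0 hp).mpr hF0int
      exact IntegrableOn.congr_fun this hkey measurableSet_Ioi
    · rw [← setIntegral_congr_fun measurableSet_Ioi hkey,
        integral_comp_rpow_Ioi F0 hp, hF0val]
      have hm0 : (0:ℝ) < (m:ℝ) := by exact_mod_cast hm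
      have hGm : Gamma (m:ℝ) ≠ 0 := (Real.Gamma_pos_of_pos hm0).ne'
      rw [hc, hd]
      field_simp
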